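/- Let a > 0 and λ ∈ ℝ. If the density of BSN(λ, a, a) is symmetric about 0, i.e. g(−x; λ, a, a) = g(x; λ, a, a) for all real x, then λ = 0. -/

import Mathlib

open MeasureTheory

/-- Standard normal density. -/
noncomputable def normPdf (x : ℝ) : ℝ := Real.exp (-x ^ 2 / 2) / Real.sqrt (2 * Real.pi)

/-- Standard normal cdf. -/
noncomputable def normCdf (x : ℝ) : ℝ := ∫ t in Set.Iic x, normPdf t

/-- Skew-normal cdf with parameter `l`. -/
noncomputable def snCdf (l z : ℝ) : ℝ := ∫ t in Set.Iic z, 2 * normPdf t * normCdf (l * t)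

/-- The Beta function. -/
noncomputable def betaFn (a b : ℝ) : ℝ := Real.Gamma a * Real.Gamma b / Real.Gamma (a + b)

/-- The Beta skew-normal density with parameters `l`, `a`, `b`. -/
noncomputable def bsnPdf (l a b x : ℝ) : ℝ :=
  (2 / betaFn a b) * snCdf l x ^ (a - 1) * (1 - snCdf l x) ^ (b - 1) * normPdf x *
    normCdf (l * x)

section Aux
open Set Filter Topology

/-! ### Auxiliary lemmas -/

lemma normPdf_pos (x : ℝ) : 0 < normPdf x := by
  unfold normPdf
  have := Real.pi_pos
  positivity

lemma normPdf_neg (x : ℝ) : normPdf (-x) = normPdf x := by simp [normPdf]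

lemma continuous_normPdf : Continuous normPdf := by
  unfold normPdf; fun_prop

lemma normPdf_eq (x : ℝ) : normPdf x = Real.exp (-(2⁻¹:ℝ) * x ^ 2) / Real.sqrt (2 * Real.pi) := by
  unfold normPdf; ring_nf

lemma integrable_normPdf : Integrable normPdf := by
  have : normPdf = fun x => Real.exp (-(2⁻¹:ℝ) * x ^ 2) / Real.sqrt (2 * Real.pi) :=
    funext normPdf_eq
  rw [this]
  exact (integrable_exp_neg_mul_sq (by norm_num)).div_const _

lemma integral_normPdf : ∫ x, normPdf x = 1 := by
  have h : normPdf = fun x => Real.exp (-(2⁻¹:ℝ) * x ^ 2) / Real.sqrt (2 * Real.pi) :=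
    funext normPdf_eq
  rw [h, integral_div, integral_gaussian]
  rw [show Real.pi / (2⁻¹:ℝ) = 2 * Real.pi by ring]
  have := Real.pi_pos
  rw [div_self (by positivity)]

lemma intervalIntegrable_normPdf (a b : ℝ) : IntervalIntegrable normPdf volume a b :=
  continuous_normPdf.intervalIntegrable a b

lemma normCdf_nonneg (x : ℝ) : 0 ≤ normCdf x :=
  setIntegral_nonneg measurableSet_Iic fun t _ => (normPdf_pos t).le

lemma normCdf_sub (x y : ℝ) : normCdf y - normCdf x = ∫ t in x..y, normPdf t :=
  intervalIntegral.integral_Iic_sub_Iic integrable_normPdf.integrableOn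
    integrable_normPdf.integrableOn

lemma normCdf_strictMono : StrictMono normCdf := by
  intro x y hxy
  have h := normCdf_sub x y
  have hpos : 0 < ∫ t in x..y, normPdf t :=
    intervalIntegral.intervalIntegral_pos_of_pos (intervalIntegrable_normPdf x y) normPdf_pos hxy
  linarith

lemma normCdf_pos (x : ℝ) : 0 < normCdf x := by
  have h := normCdf_sub (x - 1) x
  have hpos : 0 < ∫ t in (x-1)..x, normPdf t :=
    intervalIntegral.intervalIntegral_pos_of_pos (intervalIntegrable_normPdf _ _) normPdf_pos
      (by linarith)
  have := normCdf_nonneg (x - 1)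
  linarith

lemma normCdf_add_neg (x : ℝ) : normCdf x + normCdf (-x) = 1 := by
  have h1 : normCdf (-x) = ∫ t in Ioi x, normPdf t := by
    unfold normCdf
    have : ∫ t in Iic (-x), normPdf t = ∫ t in Iic (-x), normPdf (-t) := by
      simp_rw [normPdf_neg]
    rw [this, integral_comp_neg_Iic, neg_neg]
  rw [normCdf, h1,
    intervalIntegral.integral_Iic_add_Ioi integrable_normPdf.integrableOn integrable_normPdf.integrableOn,
    integral_normPdf]

lemma normCdf_lt_one (x : ℝ) : normCdf x < 1 := by
  have := normCdf_add_neg x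
  have := normCdf_pos (-x)
  linarith

lemma normCdf_le_one (x : ℝ) : normCdf x ≤ 1 := (normCdf_lt_one x).le

lemma normCdf_zero : normCdf 0 = 1 / 2 := by
  have := normCdf_add_neg 0
  rw [neg_zero] at this
  linarith

lemma continuous_normCdf : Continuous normCdf := by
  have h : normCdf = fun x => normCdf 0 + ∫ t in (0:ℝ)..x, normPdf t := by
    funext x
    have := normCdf_sub 0 x
    linarith
  rw [h]
  exact continuous_const.add
    (intervalIntegral.continuous_primitive (fun a b => intervalIntegrable_normPdf a b) 0)

/-- The skew-normal density. -/
noncomputable def snf (l t : ℝ) : ℝ := 2 * normPdf t * normCdf (l * t)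

lemma snCdf_eq (l x : ℝ) : snCdf l x = ∫ t in Iic x, snf l t := rfl

lemma snf_pos (l t : ℝ) : 0 < snf l t :=
  mul_pos (by have := normPdf_pos t; linarith) (normCdf_pos _)

lemma continuous_snf (l : ℝ) : Continuous (snf l) := by
  unfold snf
  exact (continuous_const.mul continuous_normPdf).mul
    (continuous_normCdf.comp (continuous_const.mul continuous_id))

lemma integrable_snf (l : ℝ) : Integrable (snf l) := by
  refine (integrable_normPdf.const_mul 2).mono (continuous_snf l).aestronglyMeasurable ?_
  filter_upwards with t
  rw [Real.norm_eq_abs, Real.norm_eq_abs, abs_of_nonneg (snf_pos l t).le,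
    abs_of_nonneg (by have := normPdf_pos t; linarith)]
  unfold snf
  have h1 := normCdf_le_one (l * t)
  have h2 := normPdf_pos t
  nlinarith

lemma snf_neg (l t : ℝ) : snf (-l) (-t) = snf l t := by
  simp [snf, normPdf_neg, neg_mul, mul_neg, neg_neg]

lemma integral_snf_neg (l : ℝ) : ∫ t, snf (-l) t = ∫ t, snf l t := by
  have h : ∀ t, snf (-l) t = snf l (-t) := by
    intro t
    rw [← snf_neg l (-t), neg_neg]
  simp_rw [h]
  exact MeasureTheory.integral_neg_eq_self (snf l) volume

lemma snf_add_neg (l t : ℝ) : snf l t + snf (-l) t = 2 * normPdf t := by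
  unfold snf
  have : (-l) * t = -(l * t) := by ring
  rw [this]
  have := normCdf_add_neg (l * t)
  nlinarith [normPdf_pos t]

lemma integral_snf (l : ℝ) : ∫ t, snf l t = 1 := by
  have h1 : ∫ t, (snf l t + snf (-l) t) = 2 := by
    have : (fun t => snf l t + snf (-l) t) = fun t => 2 * normPdf t :=
      funext (snf_add_neg l)
    rw [this, integral_const_mul, integral_normPdf]
    norm_num
  rw [integral_add (integrable_snf l) (integrable_snf (-l))] at h1
  have h2 := integral_snf_neg l
  linarith

lemma snCdf_nonneg (l x : ℝ) : 0 ≤ snCdf l x :=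
  setIntegral_nonneg measurableSet_Iic fun t _ => (snf_pos l t).le

lemma snCdf_sub (l x y : ℝ) : snCdf l y - snCdf l x = ∫ t in x..y, snf l t :=
  intervalIntegral.integral_Iic_sub_Iic (integrable_snf l).integrableOn
    (integrable_snf l).integrableOn

lemma snCdf_strictMono (l : ℝ) : StrictMono (snCdf l) := by
  intro x y hxy
  have h := snCdf_sub l x y
  have hpos : 0 < ∫ t in x..y, snf l t :=
    intervalIntegral.intervalIntegral_pos_of_pos ((continuous_snf l).intervalIntegrable x y)
      (snf_pos l) hxy
  linarith

lemma snCdf_pos (l x : ℝ) : 0 < snCdf l x := by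
  have h := snCdf_sub l (x - 1) x
  have hpos : 0 < ∫ t in (x-1)..x, snf l t :=
    intervalIntegral.intervalIntegral_pos_of_pos ((continuous_snf l).intervalIntegrable _ _)
      (snf_pos l) (by linarith)
  have := snCdf_nonneg l (x - 1)
  linarith

lemma snCdf_add_Ioi (l x : ℝ) : snCdf l x + ∫ t in Ioi x, snf l t = 1 := by
  rw [snCdf_eq,
    intervalIntegral.integral_Iic_add_Ioi (integrable_snf l).integrableOn (integrable_snf l).integrableOn,
    integral_snf]

lemma snCdf_le_one (l x : ℝ) : snCdf l x ≤ 1 := by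
  have h := snCdf_add_Ioi l x
  have : 0 ≤ ∫ t in Ioi x, snf l t :=
    setIntegral_nonneg measurableSet_Ioi fun t _ => (snf_pos l t).le
  linarith

lemma snCdf_lt_one (l x : ℝ) : snCdf l x < 1 :=
  lt_of_lt_of_le (snCdf_strictMono l (lt_add_one x)) (snCdf_le_one l (x + 1))

lemma continuous_snCdf (l : ℝ) : Continuous (snCdf l) := by
  have h : snCdf l = fun x => snCdf l 0 + ∫ t in (0:ℝ)..x, snf l t := by
    funext x
    have := snCdf_sub l 0 x
    linarith
  rw [h]
  exact continuous_const.add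
    (intervalIntegral.continuous_primitive (fun a b => (continuous_snf l).intervalIntegrable a b) 0)

lemma hasDerivAt_snCdf (l x : ℝ) : HasDerivAt (snCdf l) (snf l x) x := by
  have h : snCdf l = fun x => snCdf l 0 + ∫ t in (0:ℝ)..x, snf l t := by
    funext x
    have := snCdf_sub l 0 x
    linarith
  rw [h]
  exact (intervalIntegral.integral_hasDerivAt_right
    ((continuous_snf l).intervalIntegrable 0 x)
    ((continuous_snf l).stronglyMeasurableAtFilter _ _)
    (continuous_snf l).continuousAt).const_add _

lemma snCdf_tendsto_atTop (l : ℝ) : Tendsto (snCdf l) atTop (𝓝 1) := by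
  have h1 : Tendsto (fun T => ∫ t in (0:ℝ)..T, snf l t) atTop (𝓝 (∫ t in Ioi (0:ℝ), snf l t)) :=
    intervalIntegral_tendsto_integral_Ioi 0 (integrable_snf l).integrableOn tendsto_id
  have h2 : Tendsto (fun T => snCdf l 0 + ∫ t in (0:ℝ)..T, snf l t) atTop
      (𝓝 (snCdf l 0 + ∫ t in Ioi (0:ℝ), snf l t)) := tendsto_const_nhds.add h1
  rw [snCdf_add_Ioi l 0] at h2
  refine h2.congr fun T => ?_
  have := snCdf_sub l 0 T
  linarith

lemma snCdf_tendsto_atBot (l : ℝ) : Tendsto (snCdf l) atBot (𝓝 0) := by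
  have h1 : Tendsto (fun u => ∫ t in u..(0:ℝ), snf l t) atBot (𝓝 (∫ t in Iic (0:ℝ), snf l t)) :=
    intervalIntegral_tendsto_integral_Iic 0 (integrable_snf l).integrableOn tendsto_id
  have h2 : Tendsto (fun u => snCdf l 0 - ∫ t in u..(0:ℝ), snf l t) atBot
      (𝓝 (snCdf l 0 - ∫ t in Iic (0:ℝ), snf l t)) := tendsto_const_nhds.sub h1
  rw [show (∫ t in Iic (0:ℝ), snf l t) = snCdf l 0 from rfl, sub_self] at h2
  refine h2.congr fun u => ?_
  have := snCdf_sub l u 0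
  linarith

lemma snCdf_neg_arg (l x : ℝ) : snCdf l (-x) = 1 - snCdf (-l) x := by
  have h1 : snCdf l (-x) = ∫ t in Ioi x, snf (-l) t := by
    rw [snCdf_eq]
    have : ∫ t in Iic (-x), snf l t = ∫ t in Iic (-x), snf (-l) (-t) := by
      simp_rw [snf_neg]
    rw [this, integral_comp_neg_Iic, neg_neg]
  have h2 := snCdf_add_Ioi (-l) x
  linarith

lemma betaFn_pos {a : ℝ} (ha : 0 < a) : 0 < betaFn a a := by
  unfold betaFn
  have h1 := Real.Gamma_pos_of_pos ha
  have h2 := Real.Gamma_pos_of_pos (by linarith : (0:ℝ) < a + a)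
  positivity

/-- Integrand of the incomplete beta function. -/
noncomputable def psiB (a u : ℝ) : ℝ := u ^ (a - 1) * (1 - u) ^ (a - 1)

/-- Antiderivative of `psiB` based at `1/2`. -/
noncomputable def HB (a u : ℝ) : ℝ := ∫ s in (1/2 : ℝ)..u, psiB a s

lemma psiB_pos {a u : ℝ} (h0 : 0 < u) (h1 : u < 1) : 0 < psiB a u :=
  mul_pos (Real.rpow_pos_of_pos h0 _) (Real.rpow_pos_of_pos (by linarith) _)

lemma psiB_symm (a u : ℝ) : psiB a (1 - u) = psiB a u := by
  unfold psiB
  rw [sub_sub_cancel, mul_comm]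

lemma continuousAt_psiB {a u : ℝ} (h0 : 0 < u) (h1 : u < 1) : ContinuousAt (psiB a) u := by
  unfold psiB
  have c1 : ContinuousAt (fun v : ℝ => v ^ (a - 1)) u :=
    Real.continuousAt_rpow_const u (a - 1) (Or.inl h0.ne')
  have c2 : ContinuousAt (fun v : ℝ => (1 - v) ^ (a - 1)) u := by
    have : ContinuousAt (fun v : ℝ => v ^ (a - 1)) (1 - u) :=
      Real.continuousAt_rpow_const (1 - u) (a - 1) (Or.inl (by linarith))
    exact this.comp ((continuous_const.sub continuous_id).continuousAt)
  exact c1.mul c2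

lemma continuousOn_psiB (a : ℝ) : ContinuousOn (psiB a) (Ioc 0 (1/2 : ℝ)) := fun s hs =>
  (continuousAt_psiB hs.1 (by have := hs.2; norm_num; linarith)).continuousWithinAt

lemma intervalIntegrable_psiB_lower {a : ℝ} (ha : 0 < a) :
    IntervalIntegrable (psiB a) volume 0 (1/2) := by
  set M : ℝ := max ((1/2 : ℝ) ^ (a - 1)) 1 with hM
  have hMpos : 0 < M := lt_of_lt_of_le one_pos (le_max_right _ _)
  have hdom : IntervalIntegrable (fun s : ℝ => M * s ^ (a - 1)) volume 0 (1/2) :=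
    (intervalIntegral.intervalIntegrable_rpow' (by linarith : (-1:ℝ) < a - 1)).const_mul M
  have huIoc : Set.uIoc (0:ℝ) (1/2) = Ioc (0:ℝ) (1/2) := Set.uIoc_of_le (by norm_num)
  refine hdom.mono_fun ?_ ?_
  · rw [huIoc]
    exact (continuousOn_psiB a).aestronglyMeasurable measurableSet_Ioc
  rw [Filter.EventuallyLE, huIoc, ae_restrict_iff' measurableSet_Ioc]
  filter_upwards with s hs
  obtain ⟨hs0, hs1⟩ := hs
  have hs1' : s < 1 := by linarith
  have hpow : 0 < s ^ (a - 1) := Real.rpow_pos_of_pos hs0 _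
  have hb : (1 - s) ^ (a - 1) ≤ M := by
    rcases le_total (a - 1) 0 with hc | hc
    · refine le_trans ?_ (le_max_left _ _)
      exact Real.rpow_le_rpow_of_nonpos (by norm_num) (by linarith) hc
    · refine le_trans ?_ (le_max_right _ _)
      exact Real.rpow_le_one (by linarith) (by linarith) hc
  rw [Real.norm_eq_abs, Real.norm_eq_abs, abs_of_nonneg (psiB_pos hs0 hs1').le,
    abs_of_nonneg (by positivity)]
  unfold psiB
  calc s ^ (a - 1) * (1 - s) ^ (a - 1) ≤ s ^ (a - 1) * M := by
        exact mul_le_mul_of_nonneg_left hb hpow.le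
    _ = M * s ^ (a - 1) := mul_comm _ _

lemma intervalIntegrable_psiB {a : ℝ} (ha : 0 < a) :
    IntervalIntegrable (psiB a) volume 0 1 := by
  have hlower := intervalIntegrable_psiB_lower ha
  have hupper : IntervalIntegrable (psiB a) volume (1/2) 1 := by
    have h := (hlower.comp_sub_left 1)
    have he : (fun x : ℝ => psiB a (1 - x)) = psiB a := funext fun x => psiB_symm a x
    rw [he] at h
    norm_num at h
    exact h.symm
  exact hlower.trans hupper

lemma intervalIntegrable_psiB_sub {a u v : ℝ} (ha : 0 < a) (hu : u ∈ Icc (0:ℝ) 1)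
    (hv : v ∈ Icc (0:ℝ) 1) : IntervalIntegrable (psiB a) volume u v := by
  refine (intervalIntegrable_psiB ha).mono_set ?_
  rw [Set.uIcc_of_le (by norm_num : (0:ℝ) ≤ 1)]
  exact Set.uIcc_subset_Icc hu hv

lemma continuousOn_HB {a : ℝ} (ha : 0 < a) : ContinuousOn (HB a) (Icc 0 1) := by
  have hmem : (1/2 : ℝ) ∈ Set.uIcc (0:ℝ) 1 := by
    rw [Set.uIcc_of_le (by norm_num : (0:ℝ) ≤ 1)]
    constructor <;> norm_num
  have h := intervalIntegral.continuousOn_primitive_interval'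
    (intervalIntegrable_psiB ha) hmem
  rw [Set.uIcc_of_le (by norm_num : (0:ℝ) ≤ 1)] at h
  exact h

lemma HB_one_add_HB_zero {a : ℝ} (ha : 0 < a) : HB a 1 + HB a 0 = 0 := by
  unfold HB
  have h1 : ∫ s in (1/2 : ℝ)..1, psiB a s = ∫ s in (1/2 : ℝ)..1, psiB a (1 - s) := by
    refine intervalIntegral.integral_congr fun s _ => (psiB_symm a s).symm
  have h2 : ∫ s in (1/2 : ℝ)..1, psiB a (1 - s) = ∫ s in (0:ℝ)..(1/2), psiB a s := by
    rw [intervalIntegral.integral_comp_sub_left (psiB a) 1]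
    norm_num
  have h3 : ∫ s in (1/2 : ℝ)..0, psiB a s = -∫ s in (0:ℝ)..(1/2), psiB a s :=
    intervalIntegral.integral_symm 0 (1/2)
  rw [h1, h2, h3]
  ring

lemma HB_neg_of_lt_half {a u : ℝ} (ha : 0 < a) (h0 : 0 < u) (hu : u < 1/2) : HB a u < 0 := by
  unfold HB
  rw [intervalIntegral.integral_symm u (1/2)]
  have hpos : 0 < ∫ s in u..(1/2:ℝ), psiB a s := by
    refine intervalIntegral.intervalIntegral_pos_of_pos_on
      (intervalIntegrable_psiB_sub ha ⟨h0.le, by linarith⟩ (by norm_num)) ?_ hu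
    intro s hs
    exact psiB_pos (lt_trans h0 hs.1) (by have := hs.2; linarith)
  linarith

lemma hasDerivAt_HB {a u : ℝ} (ha : 0 < a) (h0 : 0 < u) (h1 : u < 1) :
    HasDerivAt (HB a) (psiB a u) u := by
  refine intervalIntegral.integral_hasDerivAt_right
    (intervalIntegrable_psiB_sub ha (by norm_num) ⟨h0.le, h1.le⟩) ?_ (continuousAt_psiB h0 h1)
  exact ContinuousAt.stronglyMeasurableAtFilter isOpen_Ioo
    (fun v hv => continuousAt_psiB hv.1 hv.2) u ⟨h0, h1⟩

lemma bsnPdf_eq (l a x : ℝ) :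
    bsnPdf l a a x = (1 / betaFn a a) * (psiB a (snCdf l x) * snf l x) := by
  unfold bsnPdf psiB snf
  ring

lemma bsnPdf_neg_param (l a x : ℝ) : bsnPdf (-l) a a x = bsnPdf l a a (-x) := by
  unfold bsnPdf
  have h1 : snCdf (-l) x = 1 - snCdf l (-x) := by
    have := snCdf_neg_arg (-l) x
    rw [neg_neg] at this
    linarith [snCdf_neg_arg l x]
  rw [h1, normPdf_neg, show l * (-x) = (-l) * x by ring, sub_sub_cancel]
  ring

lemma main_pos {l a : ℝ} (ha : 0 < a) (hl : 0 < l)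
    (hsym : ∀ x : ℝ, bsnPdf l a a (-x) = bsnPdf l a a x) : False := by
  set S := snCdf l with hSdef
  have hSpos : ∀ x, 0 < S x := snCdf_pos l
  have hSlt : ∀ x, S x < 1 := snCdf_lt_one l
  set K : ℝ → ℝ := fun x => HB a (S x) with hKdef
  have hK : ∀ x, HasDerivAt K (psiB a (S x) * snf l x) x := fun x =>
    (hasDerivAt_HB ha (hSpos x) (hSlt x)).comp x (hasDerivAt_snCdf l x)
  have hcont : Continuous fun x => psiB a (S x) * snf l x := by
    refine Continuous.mul ?_ (continuous_snf l)
    rw [continuous_iff_continuousAt]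
    intro x
    exact (continuousAt_psiB (hSpos x) (hSlt x)).comp (continuous_snCdf l).continuousAt
  have hFTC : ∀ u v : ℝ, (∫ x in u..v, psiB a (S x) * snf l x) = K v - K u := fun u v =>
    intervalIntegral.integral_eq_sub_of_hasDerivAt (fun x _ => hK x)
      (hcont.intervalIntegrable u v)
  have hB : 0 < betaFn a a := betaFn_pos ha
  have hconst : ∀ T : ℝ, K T + K (-T) = 2 * K 0 := by
    intro T
    have h1 : (∫ x in (0:ℝ)..T, bsnPdf l a a (-x)) = ∫ x in (0:ℝ)..T, bsnPdf l a a x :=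
      intervalIntegral.integral_congr fun x _ => hsym x
    have h2 : (∫ x in (0:ℝ)..T, bsnPdf l a a (-x)) = ∫ x in (-T)..(0:ℝ), bsnPdf l a a x := by
      rw [intervalIntegral.integral_comp_neg (fun x => bsnPdf l a a x)]
      norm_num
    have e1 : (∫ x in (0:ℝ)..T, bsnPdf l a a x) = (1 / betaFn a a) * (K T - K 0) := by
      simp_rw [bsnPdf_eq l a]
      rw [intervalIntegral.integral_const_mul, hFTC]
    have e2 : (∫ x in (-T)..(0:ℝ), bsnPdf l a a x) = (1 / betaFn a a) * (K 0 - K (-T)) := by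
      simp_rw [bsnPdf_eq l a]
      rw [intervalIntegral.integral_const_mul, hFTC]
    rw [h2, e1, e2] at h1
    have hBne : (1 / betaFn a a) ≠ 0 := by positivity
    have := mul_left_cancel₀ hBne h1
    linarith
  -- S 0 < 1/2
  have hS0 : S 0 < 1/2 := by
    have hadd : snCdf l 0 + snCdf (-l) 0 = 1 := by
      rw [snCdf_eq, snCdf_eq, ← integral_add ((integrable_snf l).integrableOn)
        ((integrable_snf (-l)).integrableOn)]
      have : ∀ t : ℝ, snf l t + snf (-l) t = 2 * normPdf t := snf_add_neg l
      simp_rw [this]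
      rw [integral_const_mul]
      have : (∫ t in Iic (0:ℝ), normPdf t) = normCdf 0 := rfl
      rw [this, normCdf_zero]
      norm_num
    have hsub : snCdf l 0 - snCdf (-l) 0 < 0 := by
      have heq : snCdf l 0 - snCdf (-l) 0 = ∫ t in Iic (0:ℝ), (snf l t - snf (-l) t) := by
        rw [snCdf_eq, snCdf_eq, integral_sub ((integrable_snf l).integrableOn)
          ((integrable_snf (-l)).integrableOn)]
      have hint : Integrable (fun t => snf l t - snf (-l) t) :=
        (integrable_snf l).sub (integrable_snf (-l))
      have hnppt : ∀ t : ℝ, t ≤ 0 → snf l t - snf (-l) t ≤ 0 := by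
        intro t ht
        unfold snf
        have hmono : normCdf (l * t) ≤ normCdf ((-l) * t) := by
          apply normCdf_strictMono.monotone
          nlinarith
        nlinarith [normPdf_pos t]
      have hsppt : ∀ t : ℝ, t < 0 → snf l t - snf (-l) t < 0 := by
        intro t ht
        unfold snf
        have hmono : normCdf (l * t) < normCdf ((-l) * t) := by
          apply normCdf_strictMono
          nlinarith
        nlinarith [normPdf_pos t]
      have hsplit : (∫ t in Iic (0:ℝ), (snf l t - snf (-l) t)) -
          (∫ t in Iic (-1:ℝ), (snf l t - snf (-l) t)) =
          ∫ t in (-1:ℝ)..0, (snf l t - snf (-l) t) :=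
        intervalIntegral.integral_Iic_sub_Iic hint.integrableOn hint.integrableOn
      have h1 : (∫ t in Iic (-1:ℝ), (snf l t - snf (-l) t)) ≤ 0 :=
        setIntegral_nonpos measurableSet_Iic fun t ht => hnppt t (by linarith [mem_Iic.mp ht])
      have h2 : (∫ t in (-1:ℝ)..0, (snf l t - snf (-l) t)) < 0 := by
        have hneg : 0 < ∫ t in (-1:ℝ)..0, (snf (-l) t - snf l t) := by
          refine intervalIntegral.intervalIntegral_pos_of_pos_on
            (((continuous_snf (-l)).sub (continuous_snf l)).intervalIntegrable (-1) 0)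
            (fun t ht => by linarith [hsppt t ht.2]) (by norm_num)
        have heq2 : (∫ t in (-1:ℝ)..0, (snf l t - snf (-l) t)) =
            -∫ t in (-1:ℝ)..0, (snf (-l) t - snf l t) := by
          rw [← intervalIntegral.integral_neg]
          exact intervalIntegral.integral_congr fun t _ => by ring
        rw [heq2]
        linarith
      rw [heq]
      linarith
    have : S 0 = snCdf l 0 := rfl
    linarith
  have hK0 : K 0 < 0 := HB_neg_of_lt_half ha (hSpos 0) hS0
  -- limits
  have hmem : ∀ x, S x ∈ Icc (0:ℝ) 1 := fun x => ⟨(hSpos x).le, (hSlt x).le⟩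
  have hHcont := continuousOn_HB (a := a) ha
  have t1 : Tendsto (fun T => HB a (S T)) atTop (𝓝 (HB a 1)) := by
    have hc : ContinuousWithinAt (HB a) (Icc 0 1) 1 := hHcont 1 (by norm_num)
    exact hc.tendsto.comp (tendsto_nhdsWithin_iff.mpr
      ⟨snCdf_tendsto_atTop l, Eventually.of_forall hmem⟩)
  have t2 : Tendsto (fun T => HB a (S (-T))) atTop (𝓝 (HB a 0)) := by
    have hc : ContinuousWithinAt (HB a) (Icc 0 1) 0 := hHcont 0 (by norm_num)
    have hS' : Tendsto (fun T : ℝ => S (-T)) atTop (𝓝 0) :=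
      (snCdf_tendsto_atBot l).comp tendsto_neg_atTop_atBot
    exact hc.tendsto.comp (tendsto_nhdsWithin_iff.mpr
      ⟨hS', Eventually.of_forall fun T => hmem (-T)⟩)
  have tsum : Tendsto (fun T => K T + K (-T)) atTop (𝓝 (HB a 1 + HB a 0)) := t1.add t2
  have tconst : Tendsto (fun T : ℝ => K T + K (-T)) atTop (𝓝 (2 * K 0)) := by
    refine Tendsto.congr (fun T => (hconst T).symm) tendsto_const_nhds
  have huniq : HB a 1 + HB a 0 = 2 * K 0 := tendsto_nhds_unique tsum tconst
  have hzero := HB_one_add_HB_zero ha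
  linarith

end Aux

/-- If the `BSN(l, a, a)` density is symmetric about `0`, then `l = 0`. -/
theorem bsn_symmetric_implies_lambda_zero (l a : ℝ) (ha : 0 < a)
    (hsym : ∀ x : ℝ, bsnPdf l a a (-x) = bsnPdf l a a x) : l = 0 := by
  by_contra hne
  rcases lt_or_gt_of_ne hne with hlt | hgt
  · refine main_pos ha (by linarith : 0 < -l) ?_
    intro x
    rw [bsnPdf_neg_param, bsnPdf_neg_param, neg_neg]
    exact (hsym x).symm
  · exact main_pos ha hgt hsym
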